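/- Let m ≥ 3, let Z ∼ N(0,1) and σ(z) = max(z,0). Then (E[(σ(Z)²/m² + 1/m)·exp(σ(Z)²/m)·1(Z>0)])² · (E[exp(σ(Z)²/m)])^{m−2} = ((m−1)²/(2^m (m−2)³ m)) · (√(m/(m−2)) + 1)^{m−2}. -/

import Mathlib

open MeasureTheory ProbabilityTheory Real Set

lemma gI2 {c : ℝ} (hc : 0 < c) :
    ∫ x in Ioi (0:ℝ), x ^ 2 * Real.exp (-c * x ^ 2)
      = Real.sqrt π / (4 * c * Real.sqrt c) := by
  have h := integral_rpow_mul_exp_neg_mul_rpow (p := 2) (q := 2) two_pos (by norm_num) hc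
  have h2 : ∀ x : ℝ, x ^ (2:ℝ) = x ^ (2:ℕ) := fun x => by
    rw [← Real.rpow_natCast x 2]; norm_num
  simp_rw [h2] at h
  rw [h]
  have hG : Real.Gamma ((2 + 1) / 2) = Real.sqrt π / 2 := by
    rw [show ((2:ℝ) + 1)/2 = 1/2 + 1 by norm_num, Real.Gamma_add_one (by norm_num),
      Real.Gamma_one_half_eq]
    ring
  rw [hG]
  have hrc : c ^ (-(2 + 1) / 2 : ℝ) = (c * Real.sqrt c)⁻¹ := by
    rw [show (-(2 + 1) / 2 : ℝ) = -(1 + 1/2) by norm_num, Real.rpow_neg hc.le,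
      Real.rpow_add hc, Real.rpow_one, ← Real.sqrt_eq_rpow]
  rw [hrc]
  have : Real.sqrt c > 0 := Real.sqrt_pos.mpr hc
  rw [eq_div_iff (by positivity)]
  field_simp
  ring

lemma pdf_eq (x : ℝ) :
    gaussianPDFReal 0 1 x = (Real.sqrt (2*π))⁻¹ * Real.exp (-(x^2)/2) := by
  simp [gaussianPDFReal]

lemma gauss_integral_eq (f : ℝ → ℝ) :
    ∫ z, f z ∂(gaussianReal 0 1) = ∫ z, gaussianPDFReal 0 1 z * f z := by
  rw [gaussianReal_of_var_ne_zero _ one_ne_zero]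
  rw [show gaussianPDF 0 1 = fun x => ((gaussianPDFReal 0 1 x).toNNReal : ENNReal) from rfl]
  rw [integral_withDensity_eq_integral_smul
    ((measurable_gaussianPDFReal 0 1).real_toNNReal) f]
  congr 1
  funext x
  rw [NNReal.smul_def, Real.coe_toNNReal _ (gaussianPDFReal_nonneg 0 1 x)]
  rfl

/-- Closed-form evaluation of the limiting off-diagonal hidden-layer Hessian norm for a
1-hidden-layer ReLU network with cross-entropy loss: for `m ≥ 3` and `Z ∼ N(0,1)`,
`(E[(σ(Z)²/m² + 1/m) e^{σ(Z)²/m} 1(Z>0)])² (E[e^{σ(Z)²/m}])^{m−2}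
  = ((m−1)²/(2^m (m−2)³ m)) (√(m/(m−2)) + 1)^{m−2}`. -/
theorem relu_ce_offdiag_closed_form (m : ℕ) (hm : 3 ≤ m) :
    (∫ z, ((max z 0) ^ 2 / (m : ℝ) ^ 2 + 1 / (m : ℝ)) *
          Real.exp ((max z 0) ^ 2 / (m : ℝ)) * (if 0 < z then (1 : ℝ) else 0)
        ∂(gaussianReal 0 1)) ^ 2 *
      (∫ z, Real.exp ((max z 0) ^ 2 / (m : ℝ)) ∂(gaussianReal 0 1)) ^ (m - 2)
    = (((m : ℝ) - 1) ^ 2 / (2 ^ m * ((m : ℝ) - 2) ^ 3 * (m : ℝ))) *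
        (Real.sqrt ((m : ℝ) / ((m : ℝ) - 2)) + 1) ^ (m - 2) := by
  set M : ℝ := (m : ℝ) with hMdef
  have hM3 : (3:ℝ) ≤ M := by rw [hMdef]; exact_mod_cast hm
  have hM0 : (0:ℝ) < M := by linarith
  have hM2 : (0:ℝ) < M - 2 := by linarith
  set c : ℝ := (M - 2)/(2*M) with hc
  have hcpos : 0 < c := by positivity
  set t : ℝ := Real.sqrt (M/(M-2)) with ht
  have htpos : 0 < t := Real.sqrt_pos.mpr (by positivity)
  have ht2 : t^2 = M/(M-2) := Real.sq_sqrt (by positivity)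
  have hs2 : (0:ℝ) < Real.sqrt 2 := Real.sqrt_pos.mpr (by norm_num)
  have hspi : (0:ℝ) < Real.sqrt π := Real.sqrt_pos.mpr pi_pos
  have h2pi : Real.sqrt (2*π) = Real.sqrt 2 * Real.sqrt π := Real.sqrt_mul (by norm_num) _
  have hct : c = 1/(2*t^2) := by rw [ht2, hc]; field_simp
  have hsc : Real.sqrt c = 1/(Real.sqrt 2 * t) := by
    rw [hct, one_div, Real.sqrt_inv, Real.sqrt_mul (by norm_num) (t^2),
      Real.sqrt_sq htpos.le, one_div]
  have hexp : ∀ x : ℝ, Real.exp (-(x^2)/2) * Real.exp (x^2/M) = Real.exp (-c*x^2) := by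
    intro x
    rw [← Real.exp_add]
    congr 1
    rw [hc]
    field_simp
    ring
  -- the common bound / pointwise facts
  have hbound : ∀ z : ℝ, gaussianPDFReal 0 1 z * Real.exp ((max z 0)^2/M)
      ≤ (Real.sqrt (2*π))⁻¹ * Real.exp (-c*z^2) := by
    intro z
    rw [pdf_eq]
    rcases le_or_gt z 0 with hz | hz
    · rw [max_eq_right hz]
      simp only [ne_eq, OfNat.ofNat_ne_zero, not_false_eq_true, zero_pow, zero_div,
        Real.exp_zero, mul_one]
      have h1 : -(z^2)/2 ≤ -c*z^2 := by
        have hcle : c ≤ 1/2 := by rw [hc]; rw [div_le_div_iff₀ (by positivity) (by norm_num)]; linarith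
        nlinarith [sq_nonneg z]
      exact mul_le_mul_of_nonneg_left (Real.exp_le_exp.mpr h1) (by positivity)
    · rw [max_eq_left hz.le, mul_assoc, hexp z]
  -- second integral
  have hI2 : (∫ z, Real.exp ((max z 0)^2 / M) ∂(gaussianReal 0 1)) = (t+1)/2 := by
    rw [gauss_integral_eq]
    have hcont : Continuous fun z : ℝ => gaussianPDFReal 0 1 z * Real.exp ((max z 0)^2/M) := by
      simp only [pdf_eq]
      fun_prop
    have hint : Integrable fun z : ℝ => gaussianPDFReal 0 1 z * Real.exp ((max z 0)^2/M) := by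
      refine Integrable.mono' (((integrable_exp_neg_mul_sq hcpos).const_mul
        ((Real.sqrt (2*π))⁻¹))) hcont.aestronglyMeasurable (ae_of_all _ fun z => ?_)
      rw [Real.norm_eq_abs, abs_of_nonneg
        (mul_nonneg (gaussianPDFReal_nonneg 0 1 z) (Real.exp_nonneg _))]
      exact hbound z
    rw [← intervalIntegral.integral_Iic_add_Ioi (b := (0:ℝ)) hint.integrableOn hint.integrableOn]
    have hIic : ∫ z in Iic (0:ℝ), gaussianPDFReal 0 1 z * Real.exp ((max z 0)^2/M)
        = 1/2 := by
      have heq : EqOn (fun z : ℝ => gaussianPDFReal 0 1 z * Real.exp ((max z 0)^2/M))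
          (fun z : ℝ => (Real.sqrt (2*π))⁻¹ * Real.exp (-(1/2) * z^2)) (Iic 0) := by
        intro z hz
        simp only
        rw [pdf_eq, max_eq_right (mem_Iic.mp hz)]
        rw [show (0:ℝ)^2/M = 0 by simp, Real.exp_zero, mul_one]
        ring_nf
      rw [setIntegral_congr_fun measurableSet_Iic heq, integral_const_mul]
      have hrefl : ∫ z in Iic (0:ℝ), Real.exp (-(1/2) * z^2)
          = ∫ z in Ioi (0:ℝ), Real.exp (-(1/2) * z^2) := by
        have h := integral_comp_neg_Ioi (c := (0:ℝ))
          (f := fun z : ℝ => Real.exp (-(1/2) * z^2))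
        simp only [neg_zero, neg_sq] at h
        rw [← h]
      rw [hrefl, integral_gaussian_Ioi, show π/(1/2:ℝ) = 2*π by ring]
      have hs2pi : (0:ℝ) < Real.sqrt (2*π) := Real.sqrt_pos.mpr (by positivity)
      field_simp
    have hIoi : ∫ z in Ioi (0:ℝ), gaussianPDFReal 0 1 z * Real.exp ((max z 0)^2/M)
        = t/2 := by
      have heq : EqOn (fun z : ℝ => gaussianPDFReal 0 1 z * Real.exp ((max z 0)^2/M))
          (fun z : ℝ => (Real.sqrt (2*π))⁻¹ * Real.exp (-c * z^2)) (Ioi 0) := by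
        intro z hz
        simp only
        rw [pdf_eq, max_eq_left (le_of_lt (mem_Ioi.mp hz)), mul_assoc, hexp z]
      rw [setIntegral_congr_fun measurableSet_Ioi heq, integral_const_mul,
        integral_gaussian_Ioi]
      have hpc : Real.sqrt (π/c) = Real.sqrt π * (Real.sqrt 2 * t) := by
        rw [Real.sqrt_div pi_pos.le, hsc]
        field_simp
      rw [hpc, h2pi]
      field_simp
    rw [hIic, hIoi]
    ring
  -- first integral
  have hrp2 : ∀ x : ℝ, x ^ (2:ℝ) = x ^ (2:ℕ) := fun x => by
    rw [← Real.rpow_natCast x 2]; norm_num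
  have hint2 : IntegrableOn (fun z : ℝ => z^2 * Real.exp (-c*z^2)) (Ioi 0) := by
    have h := integrableOn_rpow_mul_exp_neg_mul_sq hcpos (s := 2) (by norm_num)
    simp_rw [hrp2] at h
    exact h
  have hint0 : IntegrableOn (fun z : ℝ => Real.exp (-c*z^2)) (Ioi 0) :=
    (integrable_exp_neg_mul_sq hcpos).integrableOn
  have hpc : Real.sqrt (π/c) = Real.sqrt π * (Real.sqrt 2 * t) := by
    rw [Real.sqrt_div pi_pos.le, hsc]
    field_simp
  have hsq2 : Real.sqrt 2 ^ 2 = 2 := Real.sq_sqrt (by norm_num)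
  have hI1 : (∫ z, ((max z 0)^2/M^2 + 1/M) * Real.exp ((max z 0)^2/M)
        * (if 0 < z then (1:ℝ) else 0) ∂(gaussianReal 0 1))
      = t*(M-1)/(2*M*(M-2)) := by
    rw [gauss_integral_eq]
    have hind : (fun z : ℝ => gaussianPDFReal 0 1 z * (((max z 0)^2/M^2 + 1/M)
          * Real.exp ((max z 0)^2/M) * (if 0 < z then (1:ℝ) else 0)))
        = (Ioi (0:ℝ)).indicator (fun z : ℝ => (Real.sqrt (2*π))⁻¹
          * ((1/M^2) * (z^2 * Real.exp (-c*z^2)) + (1/M) * Real.exp (-c*z^2))) := by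
      funext z
      by_cases hz : 0 < z
      · rw [Set.indicator_of_mem (mem_Ioi.mpr hz), pdf_eq, max_eq_left hz.le,
          if_pos hz, mul_one, ← hexp z]
        ring
      · rw [Set.indicator_of_notMem (by simpa using hz), if_neg hz]
        ring
    rw [hind, integral_indicator measurableSet_Ioi, integral_const_mul,
      integral_add (hint2.const_mul _) (hint0.const_mul _), integral_const_mul,
      integral_const_mul, integral_gaussian_Ioi, gI2 hcpos, hpc, hsc, hct, h2pi]
    have h1 : t^3 = t * (M/(M-2)) := by
      rw [pow_succ, ht2]; ring
    have ht2' : t^2*(M-2) = M := by rw [ht2]; field_simp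
    field_simp
    linear_combination 4 * ht2'
  -- final assembly
  rw [hI1, hI2]
  have hm2 : m - 2 + 2 = m := by omega
  have hpow : (2:ℝ)^m = 2^(m-2) * 4 := by
    calc (2:ℝ)^m = 2^(m-2+2) := by rw [hm2]
    _ = 2^(m-2) * 4 := by rw [pow_add]; norm_num
  rw [hpow, div_pow, div_pow, mul_pow, ht2]
  have hq : (0:ℝ) < 2^(m-2) := by positivity
  field_simp
  ring
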